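/- arXiv:2510.26257 — 8 statements merged into one kernel-verified Lean document; each statement's English description precedes it below -/
import Mathlib

section
/- If α ≥ α* and x_α is a maximizer of x ↦ -f₁(x) + α·f₂(x) over F, then f₁(x_α)/f₂(x_α) ≥ α* and α - g(α)/f₂(x_α) = f₁(x_α)/f₂(x_α) ≤ α. That is, the Dinkelbach update stays within [α*, α]. -/
/-- If α ≥ α* and x_α maximizes x ↦ -f₁ x + α·f₂ x over F, then
f₁(x_α)/f₂(x_α) ≥ α* and α - g(α)/f₂(x_α) = f₁(x_α)/f₂(x_α) ≤ α:
the Dinkelbach update stays within [α*, α]. -/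
theorem stmt_4 {n : ℕ} (F : Set (Fin n → ℝ)) (hFne : F.Nonempty) (hFc : IsCompact F)
    (f₁ f₂ : (Fin n → ℝ) → ℝ) (hf₁ : ContinuousOn f₁ F) (hf₂ : ContinuousOn f₂ F)
    (hf₂pos : ∀ x ∈ F, 0 < f₂ x)
    (g : ℝ → ℝ)
    (hg : ∀ t : ℝ, IsGreatest ((fun x => -f₁ x + t * f₂ x) '' F) (g t))
    (αstar : ℝ)
    (hmin : IsLeast ((fun x => f₁ x / f₂ x) '' F) αstar)
    (α : ℝ) (hα : αstar ≤ α)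
    (xα : Fin n → ℝ) (hxα : xα ∈ F)
    (hgα : g α = -f₁ xα + α * f₂ xα) :
    αstar ≤ f₁ xα / f₂ xα ∧
    α - g α / f₂ xα = f₁ xα / f₂ xα ∧
    f₁ xα / f₂ xα ≤ α := by
  have hpos := hf₂pos xα hxα
  have hne : f₂ xα ≠ 0 := ne_of_gt hpos
  have h1 : αstar ≤ f₁ xα / f₂ xα := hmin.2 ⟨xα, hxα, rfl⟩
  obtain ⟨x₀, hx₀, hx₀eq⟩ := hmin.1
  have hpos₀ := hf₂pos x₀ hx₀
  have hratio : f₁ x₀ = αstar * f₂ x₀ := by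
    field_simp at hx₀eq; linarith [hx₀eq]
  have hge : -f₁ x₀ + α * f₂ x₀ ≤ g α := (hg α).2 ⟨x₀, hx₀, rfl⟩
  have hg0 : 0 ≤ g α := by nlinarith
  have h3 : f₁ xα / f₂ xα ≤ α := by
    rw [div_le_iff₀ hpos]; nlinarith
  refine ⟨h1, ?_, h3⟩
  field_simp [hgα]
  linarith
end

section
/- Suppose γ₀ ≤ α* ≤ α₀ and the sequences are generated by γ_{k+1} = γ_k - g(γ_k)·(α_k - γ_k)/(g(α_k) - g(γ_k)) and α_{k+1} = min(α_k - g(α_k)/f₂(x_k^α), γ_{k+1} - g(γ_{k+1})/f₂(x_{k+1}^γ)), where x_t is a maximizer for parameter t. Then for all k, γ_k ≤ γ_{k+1} ≤ α* ≤ α_{k+1} ≤ α_k. -/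
/-- Monotonicity and bracketing of the accelerated interval Dinkelbach
iterates: γ_k ≤ γ_{k+1} ≤ α* ≤ α_{k+1} ≤ α_k for all k. -/
theorem stmt_5 {n : ℕ} (F : Set (Fin n → ℝ)) (hFne : F.Nonempty) (hFc : IsCompact F)
    (f₁ f₂ : (Fin n → ℝ) → ℝ) (hf₁ : ContinuousOn f₁ F) (hf₂ : ContinuousOn f₂ F)
    (hf₂pos : ∀ x ∈ F, 0 < f₂ x)
    (g : ℝ → ℝ)
    (hg : ∀ t : ℝ, IsGreatest ((fun x => -f₁ x + t * f₂ x) '' F) (g t))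
    (αstar : ℝ)
    (hmin : IsLeast ((fun x => f₁ x / f₂ x) '' F) αstar)
    (hroot : g αstar = 0)
    (γ a : ℕ → ℝ)
    (xγ xa : ℕ → (Fin n → ℝ))
    (hxγ : ∀ k, xγ k ∈ F ∧ g (γ k) = -f₁ (xγ k) + γ k * f₂ (xγ k))
    (hxa : ∀ k, xa k ∈ F ∧ g (a k) = -f₁ (xa k) + a k * f₂ (xa k))
    (hinit : g (γ 0) ≤ 0 ∧ 0 ≤ g (a 0))
    (hbracket0 : γ 0 ≤ αstar ∧ αstar ≤ a 0)
    (hne : ∀ k, γ k ≠ a k)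
    (hγrec : ∀ k, γ (k + 1) = γ k - g (γ k) * (a k - γ k) / (g (a k) - g (γ k)))
    (harec : ∀ k, a (k + 1) =
      min (a k - g (a k) / f₂ (xa k)) (γ (k + 1) - g (γ (k + 1)) / f₂ (xγ (k + 1)))) :
    ∀ k, γ k ≤ γ (k + 1) ∧ γ (k + 1) ≤ αstar ∧ αstar ≤ a (k + 1) ∧ a (k + 1) ≤ a k := by
  -- strict monotonicity of g
  have hgmono : ∀ s t : ℝ, s < t → g s < g t := by
    intro s t hst
    obtain ⟨x, hxF, hx⟩ := (hg s).1
    simp only at hx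
    have h1 : -f₁ x + t * f₂ x ≤ g t := (hg t).2 ⟨x, hxF, rfl⟩
    have h2 : 0 < f₂ x := hf₂pos x hxF
    nlinarith
  -- Newton step stays ≥ αstar
  have hratio : ∀ (t : ℝ) (x : Fin n → ℝ), x ∈ F → g t = -f₁ x + t * f₂ x →
      αstar ≤ t - g t / f₂ x := by
    intro t x hxF hx
    have h2 : 0 < f₂ x := hf₂pos x hxF
    have h3 : αstar ≤ f₁ x / f₂ x := hmin.2 ⟨x, hxF, rfl⟩
    have h4 : t - g t / f₂ x = f₁ x / f₂ x := by
      rw [hx]; field_simp; ring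
    linarith [h4 ▸ h3]
  -- maximizer at αstar
  obtain ⟨xs, hxsF, hxs⟩ := (hg αstar).1
  have hxsf2 : 0 < f₂ xs := hf₂pos xs hxsF
  have hxs0 : -f₁ xs + αstar * f₂ xs = 0 := by simpa [hroot] using hxs
  -- one step
  have step : ∀ k, γ k ≤ αstar → αstar ≤ a k →
      γ k ≤ γ (k + 1) ∧ γ (k + 1) ≤ αstar ∧ αstar ≤ a (k + 1) ∧ a (k + 1) ≤ a k := by
    intro k hγα hαa
    have hlt : γ k < a k := lt_of_le_of_ne (le_trans hγα hαa) (hne k)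
    have hgγ : g (γ k) ≤ 0 := by
      rcases eq_or_lt_of_le hγα with h | h
      · rw [h, hroot]
      · linarith [hgmono _ _ h, hroot]
    have hga : 0 ≤ g (a k) := by
      rcases eq_or_lt_of_le hαa with h | h
      · rw [← h, hroot]
      · linarith [hgmono _ _ h, hroot]
    have hD : 0 < g (a k) - g (γ k) := by linarith [hgmono _ _ hlt]
    -- γ monotone
    have h1 : γ k ≤ γ (k + 1) := by
      rw [hγrec k]
      have : 0 ≤ -(g (γ k) * (a k - γ k)) / (g (a k) - g (γ k)) :=
        div_nonneg (by nlinarith) (le_of_lt hD)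
      have h' : -(g (γ k) * (a k - γ k)) / (g (a k) - g (γ k))
          = -(g (γ k) * (a k - γ k) / (g (a k) - g (γ k))) := by ring
      linarith [h' ▸ this]
    -- γ (k+1) ≤ αstar via convexity (support at xs)
    have h2 : γ (k + 1) ≤ αstar := by
      have hsγ : -f₁ xs + γ k * f₂ xs ≤ g (γ k) := (hg (γ k)).2 ⟨xs, hxsF, rfl⟩
      have hsa : -f₁ xs + a k * f₂ xs ≤ g (a k) := (hg (a k)).2 ⟨xs, hxsF, rfl⟩
      have key : 0 ≤ (αstar - γ k) * g (a k) + (a k - αstar) * g (γ k) := by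
        nlinarith
      set e := g (γ k) * (a k - γ k) / (g (a k) - g (γ k)) with he_def
      have he : e * (g (a k) - g (γ k)) = g (γ k) * (a k - γ k) :=
        div_mul_cancel₀ _ (ne_of_gt hD)
      rw [hγrec k, ← he_def]
      nlinarith [key, he, hD, mul_pos hD hD]
    -- αstar ≤ a (k+1)
    have h3 : αstar ≤ a (k + 1) := by
      rw [harec k]
      exact le_min (hratio _ _ (hxa k).1 (hxa k).2)
        (hratio _ _ (hxγ (k + 1)).1 (hxγ (k + 1)).2)
    -- a (k+1) ≤ a k
    have h4 : a (k + 1) ≤ a k := by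
      rw [harec k]
      have : 0 ≤ g (a k) / f₂ (xa k) :=
        div_nonneg hga (le_of_lt (hf₂pos _ (hxa k).1))
      calc min (a k - g (a k) / f₂ (xa k)) (γ (k + 1) - g (γ (k + 1)) / f₂ (xγ (k + 1)))
          ≤ a k - g (a k) / f₂ (xa k) := min_le_left _ _
        _ ≤ a k := by linarith
    exact ⟨h1, h2, h3, h4⟩
  -- invariant by induction
  have inv : ∀ k, γ k ≤ αstar ∧ αstar ≤ a k := by
    intro k
    induction k with
    | zero => exact hbracket0
    | succ m ih =>
        obtain ⟨_, h2, h3, _⟩ := step m ih.1 ih.2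
        exact ⟨h2, h3⟩
  intro k
  exact step k (inv k).1 (inv k).2
end

section
/- Under the interval iteration with γ₀ ≤ α* ≤ α₀, the monotone bounded sequences γ_k (increasing) and α_k (decreasing, via the accelerated interval update) both converge to α*, the unique root of g. -/
/-- Under the accelerated interval Dinkelbach iteration with
γ₀ ≤ α* ≤ α₀, both sequences converge to α*, the unique root of g. -/
theorem stmt_6 {n : ℕ} (F : Set (Fin n → ℝ)) (hFne : F.Nonempty) (hFc : IsCompact F)
    (f₁ f₂ : (Fin n → ℝ) → ℝ) (hf₁ : ContinuousOn f₁ F) (hf₂ : ContinuousOn f₂ F)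
    (hf₂pos : ∀ x ∈ F, 0 < f₂ x)
    (g : ℝ → ℝ)
    (hg : ∀ t : ℝ, IsGreatest ((fun x => -f₁ x + t * f₂ x) '' F) (g t))
    (hgcont : Continuous g) (hgmono : StrictMono g)
    (αstar : ℝ) (hroot : g αstar = 0)
    (γ a : ℕ → ℝ)
    (hbracket0 : γ 0 ≤ αstar ∧ αstar ≤ a 0)
    (xγ xa : ℕ → (Fin n → ℝ))
    (hxγ : ∀ k, xγ k ∈ F ∧ g (γ k) = -f₁ (xγ k) + γ k * f₂ (xγ k))
    (hxa : ∀ k, xa k ∈ F ∧ g (a k) = -f₁ (xa k) + a k * f₂ (xa k))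
    (hinit : g (γ 0) ≤ 0 ∧ 0 ≤ g (a 0))
    (hne : ∀ k, γ k ≠ a k)
    (hγrec : ∀ k, γ (k + 1) = γ k - g (γ k) * (a k - γ k) / (g (a k) - g (γ k)))
    (harec : ∀ k, a (k + 1) =
      min (a k - g (a k) / f₂ (xa k)) (γ (k + 1) - g (γ (k + 1)) / f₂ (xγ (k + 1)))) :
    Filter.Tendsto γ Filter.atTop (nhds αstar) ∧
    Filter.Tendsto a Filter.atTop (nhds αstar) := by
  -- subgradient inequality: every affine minorant is below g
  have hsub : ∀ x ∈ F, ∀ t : ℝ, -f₁ x + t * f₂ x ≤ g t := by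
    intro x hx t
    exact (hg t).2 ⟨x, hx, rfl⟩
  -- convexity of g
  have hconv : ∀ (s u lam : ℝ), 0 ≤ lam → lam ≤ 1 →
      g (lam * s + (1 - lam) * u) ≤ lam * g s + (1 - lam) * g u := by
    intro s u lam h0 h1
    obtain ⟨x, hx, hgx⟩ := (hg (lam * s + (1 - lam) * u)).1
    simp only at hgx
    have hs := hsub x hx s
    have hu := hsub x hx u
    have hexp : -f₁ x + (lam * s + (1 - lam) * u) * f₂ x
        = lam * (-f₁ x + s * f₂ x) + (1 - lam) * (-f₁ x + u * f₂ x) := by ring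
    rw [← hgx, hexp]
    exact add_le_add (mul_le_mul_of_nonneg_left hs h0)
      (mul_le_mul_of_nonneg_left hu (by linarith))
  -- Newton step from a maximizer always overshoots αstar
  have hnewton : ∀ (t : ℝ) (x : Fin n → ℝ), x ∈ F → g t = -f₁ x + t * f₂ x →
      αstar ≤ t - g t / f₂ x := by
    intro t x hx hgt
    have hpos := hf₂pos x hx
    have h := hsub x hx αstar
    rw [hroot] at h
    have hineq : g t ≤ (t - αstar) * f₂ x := by nlinarith
    have h2 : g t / f₂ x ≤ t - αstar := (div_le_iff₀ hpos).mpr hineq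
    linarith
  -- main invariant
  have key : ∀ k, g (γ k) ≤ 0 ∧ 0 ≤ g (a k) := by
    intro k
    induction k with
    | zero => exact hinit
    | succ k ih =>
      obtain ⟨h1, h2⟩ := ih
      have hgne : g (γ k) ≠ g (a k) := fun h => hne k (hgmono.injective h)
      have hD : 0 < g (a k) - g (γ k) := by
        have := lt_of_le_of_ne (h1.trans h2) hgne
        linarith
      set lam := g (a k) / (g (a k) - g (γ k)) with hlam
      have hlam0 : 0 ≤ lam := div_nonneg h2 hD.le
      have hlam1 : lam ≤ 1 := by
        rw [hlam, div_le_one hD]; linarith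
      have hcomb : γ (k + 1) = lam * γ k + (1 - lam) * a k := by
        rw [hγrec k, hlam]
        field_simp
        ring
      have hγ1 : g (γ (k + 1)) ≤ 0 := by
        have hc := hconv (γ k) (a k) lam hlam0 hlam1
        rw [← hcomb] at hc
        have hz : lam * g (γ k) + (1 - lam) * g (a k) = 0 := by
          rw [hlam]; field_simp; ring
        linarith
      refine ⟨hγ1, ?_⟩
      have ha1 := hnewton (a k) (xa k) (hxa k).1 (hxa k).2
      have hγ1' := hnewton (γ (k + 1)) (xγ (k + 1)) (hxγ (k + 1)).1 (hxγ (k + 1)).2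
      have hstar : αstar ≤ a (k + 1) := by
        rw [harec k]; exact le_min ha1 hγ1'
      rw [← hroot]
      exact hgmono.monotone hstar
  have hγle : ∀ k, γ k ≤ αstar := fun k =>
    hgmono.le_iff_le.mp (by rw [hroot]; exact (key k).1)
  have hale : ∀ k, αstar ≤ a k := fun k =>
    hgmono.le_iff_le.mp (by rw [hroot]; exact (key k).2)
  have hD : ∀ k, 0 < g (a k) - g (γ k) := by
    intro k
    have hgne : g (γ k) ≠ g (a k) := fun h => hne k (hgmono.injective h)
    have := lt_of_le_of_ne ((key k).1.trans (key k).2) hgne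
    linarith
  have hlt : ∀ k, γ k < a k := fun k => hgmono.lt_iff_lt.mp (by have := hD k; linarith)
  have hγmono : Monotone γ := by
    apply monotone_nat_of_le_succ
    intro k
    rw [hγrec k]
    have hnum : g (γ k) * (a k - γ k) ≤ 0 :=
      mul_nonpos_of_nonpos_of_nonneg (key k).1 (by have := hlt k; linarith)
    have hq : g (γ k) * (a k - γ k) / (g (a k) - g (γ k)) ≤ 0 :=
      div_nonpos_of_nonpos_of_nonneg hnum (hD k).le
    linarith
  have ha_anti : Antitone a := by
    apply antitone_nat_of_succ_le
    intro k
    rw [harec k]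
    refine (min_le_left _ _).trans ?_
    have : 0 ≤ g (a k) / f₂ (xa k) := div_nonneg (key k).2 (hf₂pos _ (hxa k).1).le
    linarith
  -- limits exist
  have hγbdd : BddAbove (Set.range γ) := ⟨αstar, by rintro _ ⟨k, rfl⟩; exact hγle k⟩
  have habdd : BddBelow (Set.range a) := ⟨αstar, by rintro _ ⟨k, rfl⟩; exact hale k⟩
  set L := ⨆ k, γ k with hLdef
  set M := ⨅ k, a k with hMdef
  have hγL : Filter.Tendsto γ Filter.atTop (nhds L) := tendsto_atTop_ciSup hγmono hγbdd
  have haM : Filter.Tendsto a Filter.atTop (nhds M) := tendsto_atTop_ciInf ha_anti habdd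
  have hLle : L ≤ αstar := ciSup_le hγle
  have hMge : αstar ≤ M := le_ciInf hale
  -- bound f₂ from above on F
  obtain ⟨xB, hxB, hBmax⟩ := hFc.exists_isMaxOn hFne hf₂
  set B := f₂ xB with hBdef
  have hBpos : 0 < B := hf₂pos xB hxB
  -- g (a k) ≤ B * (a k - a (k+1))
  have hga_bound : ∀ k, g (a k) ≤ B * (a k - a (k + 1)) := by
    intro k
    have hmin : a (k + 1) ≤ a k - g (a k) / f₂ (xa k) := by
      rw [harec k]; exact min_le_left _ _
    have hpos := hf₂pos _ (hxa k).1
    have h1 : g (a k) / f₂ (xa k) ≤ a k - a (k + 1) := by linarith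
    have h2 : g (a k) ≤ (a k - a (k + 1)) * f₂ (xa k) := (div_le_iff₀ hpos).mp h1
    have hd : 0 ≤ a k - a (k + 1) := by
      have := ha_anti (Nat.le_succ k); linarith
    have h3 : (a k - a (k + 1)) * f₂ (xa k) ≤ (a k - a (k + 1)) * B :=
      mul_le_mul_of_nonneg_left (hBmax (hxa k).1) hd
    nlinarith
  -- g (a k) → 0
  have haM' : Filter.Tendsto (fun k => a (k + 1)) Filter.atTop (nhds M) :=
    haM.comp (Filter.tendsto_add_atTop_nat 1)
  have hub : Filter.Tendsto (fun k => B * (a k - a (k + 1))) Filter.atTop (nhds 0) := by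
    have := (haM.sub haM').const_mul B
    simpa using this
  have hga0 : Filter.Tendsto (fun k => g (a k)) Filter.atTop (nhds 0) :=
    squeeze_zero (fun k => (key k).2) hga_bound hub
  have hgaM : Filter.Tendsto (fun k => g (a k)) Filter.atTop (nhds (g M)) :=
    (hgcont.tendsto M).comp haM
  have hgM : g M = 0 := tendsto_nhds_unique hgaM hga0
  have hMeq : M = αstar := hgmono.injective (by rw [hgM, hroot])
  have haα : Filter.Tendsto a Filter.atTop (nhds αstar) := hMeq ▸ haM
  -- now show L = αstar
  have hLeq : L = αstar := by
    by_cases hgL : g L = 0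
    · exact hgmono.injective (by rw [hgL, hroot])
    · exfalso
      have hγL' : Filter.Tendsto (fun k => γ (k + 1)) Filter.atTop (nhds L) :=
        hγL.comp (Filter.tendsto_add_atTop_nat 1)
      have hdiff : Filter.Tendsto (fun k => γ (k + 1) - γ k) Filter.atTop (nhds 0) := by
        have := hγL'.sub hγL
        simpa using this
      have hgγ : Filter.Tendsto (fun k => g (γ k)) Filter.atTop (nhds (g L)) :=
        (hgcont.tendsto L).comp hγL
      have hga : Filter.Tendsto (fun k => g (a k)) Filter.atTop (nhds (g αstar)) :=
        (hgcont.tendsto αstar).comp haα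
      have hdenne : g αstar - g L ≠ 0 := by
        rw [hroot]
        intro h
        apply hgL
        linarith [sub_eq_zero.mp h]
      have hd2 : Filter.Tendsto (fun k => γ k - g (γ k) * (a k - γ k) / (g (a k) - g (γ k)))
          Filter.atTop (nhds (L - g L * (αstar - L) / (g αstar - g L))) := by
        exact hγL.sub ((hgγ.mul (haα.sub hγL)).div (hga.sub hgγ) hdenne)
      have hd2' : Filter.Tendsto (fun k => γ (k + 1)) Filter.atTop
          (nhds (L - g L * (αstar - L) / (g αstar - g L))) := by
        apply hd2.congr
        intro k
        exact (hγrec k).symm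
      have huni := tendsto_nhds_unique hd2' hγL'
      rw [hroot] at huni hdenne
      have hnum : g L * (αstar - L) = 0 := by
        field_simp at huni
        linarith
      rcases mul_eq_zero.mp hnum with h | h
      · exact hgL h
      · exact hgL (by rw [show L = αstar by linarith, hroot])
  exact ⟨hLeq ▸ hγL, haα⟩
end

section
/- Let g be C² and increasing with root α*, and suppose α_{k-1} < α* < α_k with f₂(x_k) a subgradient of g at α_k satisfying δg(α*, α_k) ≤ f₂(x_k). If the accelerated-Newton step α_{k+1} = α_k - g(α_k)(g(α_k)-g(α_{k-1}))(α_k-α_{k-1}) / [g(α_k)(g(α_k)-g(α_{k-1})) - g(α_{k-1})f₂(x_k)(α_k-α_{k-1})] satisfies α_{k+1} ≥ α*, then α_{k+1} - α* ≤ α_k - α* - g(α_k)/f₂(x_k), i.e., the accelerated step is at least as good as the Dinkelbach step. -/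
/-- Case 1.1: With α_{k-1} < α* < α_k and the accelerated-Newton step
landing at or above α*, the accelerated step is at least as good as the Dinkelbach
step: α_{k+1} - α* ≤ α_k - α* - g(α_k)/f₂(x_k). -/
theorem stmt_11 (g : ℝ → ℝ) (αkm αk αstar : ℝ)
    (hconv : ConvexOn ℝ Set.univ g) (hmono : StrictMono g)
    (hC2 : ContDiff ℝ 2 g)
    (hroot : g αstar = 0)
    (h1 : αkm < αstar) (h2 : αstar < αk)
    (fkm fk fstar : ℝ)
    (hfkmpos : 0 < fkm) (hfstarpos : 0 < fstar) (hfkpos : 0 < fk)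
    -- f₂(x_k) is a subgradient of g at α_k:
    (hsubgrad : ∀ β : ℝ, g αk + fk * (β - αk) ≤ g β)
    -- chain of divided-difference inequalities:
    (hc1 : fkm ≤ (g αkm - g αstar) / (αkm - αstar))
    (hc2 : (g αkm - g αstar) / (αkm - αstar) ≤ fstar)
    (hc3 : fstar ≤ (g αstar - g αk) / (αstar - αk))
    (hc4 : (g αstar - g αk) / (αstar - αk) ≤ fk)
    (hc5 : (g αk - g αkm) / (αk - αkm) ≤ fk)
    (αk1 : ℝ)
    (hstep : αk1 = αk - g αk * (g αk - g αkm) * (αk - αkm) /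
      (g αk * (g αk - g αkm) - g αkm * fk * (αk - αkm)))
    (hup : αstar ≤ αk1) :
    αk1 - αstar ≤ αk - αstar - g αk / fk := by
  set A := g αk with hA
  set B := g αkm with hB
  set D := αk - αkm with hD
  have hApos : 0 < A := by
    have := hmono h2
    rw [hroot] at this
    exact this
  have hBneg : B < 0 := by
    have := hmono h1
    rw [hroot] at this
    exact this
  have hDpos : 0 < D := by simp only [hD]; linarith
  have h5 : A - B ≤ fk * D := by
    have := (div_le_iff₀ hDpos).mp hc5
    linarith
  have hden : 0 < A * (A - B) - B * fk * D := by nlinarith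
  rw [hstep]
  have key : A / fk ≤ A * (A - B) * D / (A * (A - B) - B * fk * D) := by
    rw [div_le_div_iff₀ hfkpos hden]
    nlinarith [mul_le_mul_of_nonneg_left h5 (le_of_lt (mul_pos hApos hApos))]
  linarith
end

section
/- Under the same configuration (α_{k-1} < α* < α_k), if the accelerated-Newton step produces α_{k+1} < α*, then the undershoot is controlled: |α_{k+1} - α*| ≤ M·|α_k - α*|, where M = (f₂(x_{-1}) - min_{ξ∈F} f₂(ξ))/min_{ξ∈F} f₂(ξ) with f₂(x_{-1}) an upper bound on all subgradient values used. -/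
lemma aux12 (a b fmin fmax fk s t : ℝ) (hfmin : 0 < fmin) (hfk : fmin ≤ fk)
    (hfk2 : fk ≤ fmax) (ha : 0 < a) (hb : 0 < b) (ht : 0 < t) (hts : t < s)
    (hA : a ≤ fk * t) (hA2 : fmin * t ≤ a) (hB2 : fmin * (s - t) ≤ b) :
    fmin * (a * (a + b) * s) ≤ fmax * t * (a * (a + b) + b * fk * s) := by
  nlinarith [mul_nonneg (by linarith : (0:ℝ) ≤ fk * t - a)
      (mul_nonneg (mul_nonneg hfmin.le (by linarith : (0:ℝ) ≤ a + b)) (by linarith : (0:ℝ) ≤ s)),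
    mul_nonneg (mul_nonneg (by linarith : (0:ℝ) ≤ fmax - fmin) hb.le)
      (mul_nonneg (mul_nonneg (by linarith : (0:ℝ) ≤ fk) (by linarith : (0:ℝ) ≤ s)) ht.le),
    mul_nonneg (mul_nonneg (mul_nonneg (by linarith : (0:ℝ) ≤ fmax - fk)
      (mul_nonneg hfmin.le (by linarith : (0:ℝ) ≤ s))) ha.le) ht.le,
    mul_nonneg (mul_nonneg (by linarith : (0:ℝ) ≤ a + b - fmin * s)
      (mul_nonneg (by linarith : (0:ℝ) ≤ fmax) ha.le)) ht.le]

/-- Case 1.2: With α_{k-1} < α* < α_k, if the accelerated-Newton step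
undershoots (α_{k+1} < α*), then |α_{k+1} - α*| ≤ M·|α_k - α*|, where
M = (f₂(x₋₁) - min_F f₂)/min_F f₂ bounds the range of subgradient values. -/
theorem stmt_12 (g : ℝ → ℝ) (αkm αk αstar : ℝ)
    (hconv : ConvexOn ℝ Set.univ g) (hmono : StrictMono g)
    (hroot : g αstar = 0)
    (h1 : αkm < αstar) (h2 : αstar < αk)
    (fmin fmax fkm fk fstar : ℝ)
    (hfminpos : 0 < fmin)
    -- all subgradient values lie in [fmin, fmax]:
    (hb1 : fmin ≤ fkm) (hb2 : fkm ≤ fmax) (hb3 : fmin ≤ fk) (hb4 : fk ≤ fmax)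
    (hb5 : fmin ≤ fstar) (hb6 : fstar ≤ fmax)
    -- f₂(x_k) is a subgradient of g at α_k:
    (hsubgrad : ∀ β : ℝ, g αk + fk * (β - αk) ≤ g β)
    -- chain of divided-difference inequalities:
    (hc1 : fkm ≤ (g αkm - g αstar) / (αkm - αstar))
    (hc2 : (g αkm - g αstar) / (αkm - αstar) ≤ fstar)
    (hc3 : fstar ≤ (g αstar - g αk) / (αstar - αk))
    (hc4 : (g αstar - g αk) / (αstar - αk) ≤ fk)
    (hc5 : (g αk - g αkm) / (αk - αkm) ≤ fk)
    (αk1 : ℝ)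
    (hstep : αk1 = αk - g αk * (g αk - g αkm) * (αk - αkm) /
      (g αk * (g αk - g αkm) - g αkm * fk * (αk - αkm)))
    (hdown : αk1 < αstar) :
    |αk1 - αstar| ≤ (fmax - fmin) / fmin * |αk - αstar| := by
  have ht : 0 < αk - αstar := by linarith
  have hst : 0 < αstar - αkm := by linarith
  have hs : 0 < αk - αkm := by linarith
  have ha : 0 < g αk := by have := hmono h2; linarith
  have hbneg : g αkm < 0 := by have := hmono h1; linarith
  -- a ≤ fk * t
  have hA : g αk ≤ fk * (αk - αstar) := by
    have := hsubgrad αstar; rw [hroot] at this; linarith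
  -- fstar * t ≤ a
  have hA2 : fmin * (αk - αstar) ≤ g αk := by
    have heq : (g αstar - g αk) / (αstar - αk) = g αk / (αk - αstar) := by
      rw [hroot, show αstar - αk = -(αk - αstar) by ring,
        show (0:ℝ) - g αk = -(g αk) by ring, neg_div_neg_eq]
    rw [heq] at hc3
    have h3' : fstar * (αk - αstar) ≤ g αk := by
      have := mul_le_mul_of_nonneg_right hc3 ht.le
      rwa [div_mul_cancel₀ _ (ne_of_gt ht)] at this
    nlinarith
  -- fmin * (αstar - αkm) ≤ -g αkm
  have hB : fmin * ((αk - αkm) - (αk - αstar)) ≤ -g αkm := by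
    have heq : (g αkm - g αstar) / (αkm - αstar) = -g αkm / (αstar - αkm) := by
      rw [hroot, show αkm - αstar = -(αstar - αkm) by ring,
        show g αkm - 0 = -(-(g αkm)) by ring, neg_div_neg_eq]
    rw [heq] at hc1
    have h1' : fkm * (αstar - αkm) ≤ -g αkm := by
      have := mul_le_mul_of_nonneg_right hc1 hst.le
      rwa [div_mul_cancel₀ _ (ne_of_gt hst)] at this
    nlinarith
  have hkey := aux12 (g αk) (-(g αkm)) fmin fmax fk (αk - αkm) (αk - αstar)
    hfminpos hb3 hb4 ha (by linarith) ht (by linarith) hA hA2 hB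
  have hDpos : 0 < g αk * (g αk - g αkm) - g αkm * fk * (αk - αkm) := by
    have h' : 0 < (-(g αkm)) * fk * (αk - αkm) :=
      mul_pos (mul_pos (by linarith) (by linarith)) hs
    nlinarith [mul_pos ha (show 0 < g αk - g αkm by linarith)]
  have hND : g αk * (g αk - g αkm) * (αk - αkm) /
      (g αk * (g αk - g αkm) - g αkm * fk * (αk - αkm)) ≤ fmax / fmin * (αk - αstar) := by
    rw [div_le_iff₀ hDpos, show fmax / fmin * (αk - αstar) *
      (g αk * (g αk - g αkm) - g αkm * fk * (αk - αkm)) =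
      fmax * (αk - αstar) * (g αk * (g αk - g αkm) - g αkm * fk * (αk - αkm)) / fmin by ring,
      le_div_iff₀ hfminpos]
    nlinarith [hkey]
  have hMeq : (fmax - fmin) / fmin * (αk - αstar) = fmax / fmin * (αk - αstar) - (αk - αstar) := by
    field_simp
  rw [abs_of_neg (by linarith), abs_of_pos ht, hstep, hMeq]
  linarith [hND]
end

section
/- Let g be convex and strictly increasing with root α*, and α* < α_k < α_{k-1}. If ρ > 1 and the screening condition g(α_{k-1})·f₂(x_k)·(α_k - α_{k-1}) ≤ ρ·g(α_k)·(g(α_k) - g(α_{k-1})) holds, then the denominator D = g(α_k)(g(α_k)-g(α_{k-1})) - g(α_{k-1})f₂(x_k)(α_k - α_{k-1}) of the accelerated-Newton step is positive; specifically D ≥ ((ρ-1)/ρ)·g(α_{k-1})·f₂(x_k)·(α_{k-1} - α_k) > 0. -/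
/-- If α* < α_k < α_{k-1}, ρ > 1 and the screening condition holds,
then the denominator D of the accelerated-Newton step satisfies
D ≥ ((ρ-1)/ρ)·g(α_{k-1})·f₂(x_k)·(α_{k-1} - α_k) > 0. -/
theorem stmt_13 (g : ℝ → ℝ) (αkm αk αstar : ℝ)
    (hmono : StrictMono g)
    (hroot : g αstar = 0)
    (h1 : αstar < αk) (h2 : αk < αkm)
    (fk : ℝ) (hfk : 0 < fk)
    -- f₂(x_k) is a subgradient of g at α_k:
    (hsubgrad : ∀ β : ℝ, g αk + fk * (β - αk) ≤ g β)
    (ρ : ℝ) (hρ : 1 < ρ)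
    (hscreen : g αkm * fk * (αk - αkm) ≤ ρ * g αk * (g αk - g αkm)) :
    (ρ - 1) / ρ * (g αkm * fk * (αkm - αk)) ≤
        g αk * (g αk - g αkm) - g αkm * fk * (αk - αkm) ∧
    0 < g αk * (g αk - g αkm) - g αkm * fk * (αk - αkm) := by
  have hgk : 0 < g αk := by have := hmono h1; linarith [hroot]
  have hgkm : 0 < g αkm := by have := hmono (h1.trans h2); linarith [hroot]
  have hρ0 : 0 < ρ := by linarith
  have hx : 0 < g αkm * fk * (αkm - αk) := by
    apply mul_pos (mul_pos hgkm hfk); linarith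
  constructor
  · rw [div_mul_eq_mul_div, div_le_iff₀ hρ0]
    nlinarith
  · nlinarith [mul_pos hx (sub_pos.mpr hρ)]
end

section
/- For α* < α_k < α_{k-1} with the screening condition (ρ > 1) holding, if the accelerated-Newton step satisfies α_{k+1} ≥ α*, then α_{k+1} - α* ≤ α_k - α* - g(α_k)/f₂(x_k); if instead α_{k+1} < α*, then α* - α_{k+1} ≤ M'·(α_k - α*) with M' = ρ·(f₂(x_{k-1}) - f₂(x*))/((ρ-1)·f₂(x*)). -/
private lemma aux_key (A B t u fk fkm fstar ρ : ℝ)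
    (hA : 0 < A) (hAB : A < B) (ht : 0 < t) (hu : 0 < u)
    (hfstar : 0 < fstar) (hρ : 1 < ρ)
    (s1 : A ≤ fk * t) (s2 : fk * u ≤ B - A) (s3 : B - A ≤ fkm * u)
    (s4 : fstar * (t + u) ≤ B)
    (s5 : ρ * (A * (B - A)) ≤ B * fk * u) :
    A / fk ≤ A * (B - A) * u / (B * fk * u - A * (B - A)) ∧
    (t < A * (B - A) * u / (B * fk * u - A * (B - A)) →
      A * (B - A) * u / (B * fk * u - A * (B - A)) - t ≤
        ρ * (fkm - fstar) / ((ρ - 1) * fstar) * t) := by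
  have hfk : 0 < fk := by nlinarith
  have hBApos : 0 < B - A := by linarith
  have hB : 0 < B := by linarith
  have hDpos : 0 < B * fk * u - A * (B - A) := by
    nlinarith [mul_pos hA hBApos]
  constructor
  · rw [div_le_div_iff₀ hfk hDpos]
    nlinarith [mul_nonneg (mul_pos hA hA).le (by linarith : (0:ℝ) ≤ B - A - fk * u)]
  · intro hlt
    have hN' : 0 < A * (B - A) * u - t * (B * fk * u - A * (B - A)) := by
      have h := (lt_div_iff₀ hDpos).mp hlt
      nlinarith [h]
    have hi : 0 < B * t - A * (t + u) := by
      nlinarith [mul_nonneg (sub_nonneg.mpr s1) (mul_pos hB hu).le, hA]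
    have hF : B * t - A * (t + u) ≤ (fkm - fstar) * (u * (t + u)) := by
      nlinarith [mul_le_mul_of_nonneg_right s3 (by linarith : (0:ℝ) ≤ t + u),
        mul_le_mul_of_nonneg_right s4 hu.le]
    have hSA : A * (B - A) * (t + u) - B * fk * u * t ≤ fk * t * (B * t - A * (t + u)) := by
      nlinarith [mul_nonneg (mul_nonneg (by linarith : (0:ℝ) ≤ t + u) hBApos.le)
        (sub_nonneg.mpr s1)]
    have hD2 : (ρ - 1) * (B * fk * u) ≤ ρ * (B * fk * u - A * (B - A)) := by nlinarith [s5]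
    have hE : 0 < (ρ - 1) * fstar := mul_pos (by linarith) hfstar
    have hutu : 0 < u * (t + u) := by positivity
    have P1 := mul_le_mul_of_nonneg_right hSA (mul_nonneg hE.le hutu.le)
    have P2 := mul_le_mul_of_nonneg_right s4
      (mul_nonneg (mul_nonneg (mul_nonneg (mul_nonneg (by linarith : (0:ℝ) ≤ ρ - 1) hfk.le)
        ht.le) hi.le) hu.le)
    have P3 := mul_le_mul_of_nonneg_right hF
      (mul_nonneg (mul_nonneg (by linarith : (0:ℝ) ≤ ρ) ht.le) hDpos.le)
    have P4 := mul_le_mul_of_nonneg_right hD2 (mul_nonneg ht.le hi.le)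
    have keymul : (A * (B - A) * u - t * (B * fk * u - A * (B - A))) * ((ρ - 1) * fstar)
          * (u * (t + u))
        ≤ ρ * (fkm - fstar) * (t * (B * fk * u - A * (B - A))) * (u * (t + u)) := by
      linarith [P1, P2, P3, P4]
    have key : (A * (B - A) * u - t * (B * fk * u - A * (B - A))) * ((ρ - 1) * fstar)
        ≤ ρ * (fkm - fstar) * (t * (B * fk * u - A * (B - A))) :=
      le_of_mul_le_mul_right keymul hutu
    have e1 : A * (B - A) * u / (B * fk * u - A * (B - A)) - t
        = (A * (B - A) * u - t * (B * fk * u - A * (B - A))) / (B * fk * u - A * (B - A)) := by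
      rw [sub_div, mul_div_cancel_right₀ _ hDpos.ne']
    rw [e1, div_le_iff₀ hDpos]
    have h2 : A * (B - A) * u - t * (B * fk * u - A * (B - A))
        ≤ ρ * (fkm - fstar) * (t * (B * fk * u - A * (B - A))) / ((ρ - 1) * fstar) :=
      (le_div_iff₀ hE).mpr key
    calc A * (B - A) * u - t * (B * fk * u - A * (B - A))
        ≤ ρ * (fkm - fstar) * (t * (B * fk * u - A * (B - A))) / ((ρ - 1) * fstar) := h2
      _ = ρ * (fkm - fstar) / ((ρ - 1) * fstar) * t * (B * fk * u - A * (B - A)) := by ring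


/-- Case 2: For α* < α_k < α_{k-1} with the screening condition (ρ > 1),
if the accelerated-Newton step lands at or above α* then it is at least as good as the
Dinkelbach step; if it undershoots, the undershoot is bounded by
M'·(α_k - α*) with M' = ρ(f₂(x_{k-1}) - f₂(x*))/((ρ-1)f₂(x*)). -/
theorem stmt_15 (g : ℝ → ℝ) (αkm αk αstar : ℝ)
    (hconv : ConvexOn ℝ Set.univ g) (hmono : StrictMono g)
    (hroot : g αstar = 0)
    (h1 : αstar < αk) (h2 : αk < αkm)
    (fstar fk fkm : ℝ) (hfstarpos : 0 < fstar)
    -- f₂(x_k) is a subgradient of g at α_k: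
    (hsubgrad : ∀ β : ℝ, g αk + fk * (β - αk) ≤ g β)
    -- chain of divided-difference inequalities:
    (hc1 : fstar ≤ (g αstar - g αk) / (αstar - αk))
    (hc2 : (g αstar - g αk) / (αstar - αk) ≤ fk)
    (hc3 : fk ≤ (g αk - g αkm) / (αk - αkm))
    (hc4 : (g αk - g αkm) / (αk - αkm) ≤ fkm)
    (hc5 : fstar ≤ (g αkm - g αstar) / (αkm - αstar))
    (ρ : ℝ) (hρ : 1 < ρ)
    (hscreen : g αkm * fk * (αk - αkm) ≤ ρ * g αk * (g αk - g αkm))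
    (αk1 : ℝ)
    (hstep : αk1 = αk - g αk * (g αk - g αkm) * (αk - αkm) /
      (g αk * (g αk - g αkm) - g αkm * fk * (αk - αkm))) :
    (αstar ≤ αk1 → αk1 - αstar ≤ αk - αstar - g αk / fk) ∧
    (αk1 < αstar →
      αstar - αk1 ≤ ρ * (fkm - fstar) / ((ρ - 1) * fstar) * (αk - αstar)) := by
  have ht : 0 < αk - αstar := by linarith
  have hu : 0 < αkm - αk := by linarith
  have hA : 0 < g αk := by have h := hmono h1; rw [hroot] at h; exact h
  have hAB : g αk < g αkm := hmono h2
  have s1 : g αk ≤ fk * (αk - αstar) := by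
    have h := (div_le_iff_of_neg (by linarith : αstar - αk < 0)).mp hc2
    rw [hroot] at h
    nlinarith [h]
  have s2 : fk * (αkm - αk) ≤ g αkm - g αk := by
    have h := (le_div_iff_of_neg (by linarith : αk - αkm < 0)).mp hc3
    nlinarith [h]
  have s3 : g αkm - g αk ≤ fkm * (αkm - αk) := by
    have h := (div_le_iff_of_neg (by linarith : αk - αkm < 0)).mp hc4
    nlinarith [h]
  have s4 : fstar * ((αk - αstar) + (αkm - αk)) ≤ g αkm := by
    have h := (le_div_iff₀ (by linarith : (0:ℝ) < αkm - αstar)).mp hc5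
    rw [hroot] at h
    nlinarith [h]
  have s5 : ρ * (g αk * (g αkm - g αk)) ≤ g αkm * fk * (αkm - αk) := by nlinarith [hscreen]
  obtain ⟨k1, k2⟩ := aux_key (g αk) (g αkm) (αk - αstar) (αkm - αk) fk fkm fstar ρ
    hA hAB ht hu hfstarpos hρ s1 s2 s3 s4 s5
  have hstep2 : αk1 = αk - g αk * (g αkm - g αk) * (αkm - αk) /
      (g αkm * fk * (αkm - αk) - g αk * (g αkm - g αk)) := by
    rw [hstep]; ring
  constructor
  · intro _
    rw [hstep2]
    linarith [k1]
  · intro hlt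
    rw [hstep2] at hlt
    have h := k2 (by linarith)
    rw [hstep2]
    linarith [h]
end

section
/- Let g be C² on [a,b] with α* ∈ (a,b), g(α*) = 0, g increasing with g' ≥ m > 0 on [a,b]. If α_{k+1} ∈ [a, α*] and the next iterate is α_{k+2} = min(α_{k+1} - g(α_{k+1})/s_{k+1}, α_k - g(α_k)/s_k) where s_t ∈ ∂g(t) with s_t ≥ m, and α_{k+2} ≥ α*, then α_{k+2} - α* ≤ (σ/m)·(α_{k+1} - α*)², where σ = max_{ξ∈[a,b]}|g''(ξ)|. Thus the two-tangent recovery step converges quadratically. -/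
/-- Quadratic convergence of the two-tangent recovery step.
If g is C² and convex on [a,b] with root α* ∈ (a,b), derivative bounded below by
m > 0, α_{k+1} ∈ [a,α*], α_k ∈ [a,b], and the iterate
α_{k+2} = min(α_{k+1} - g(α_{k+1})/g'(α_{k+1}), α_k - g(α_k)/g'(α_k)) satisfies
α_{k+2} ≥ α*, then α_{k+2} - α* ≤ (σ/m)·(α_{k+1} - α*)². -/
theorem stmt_17 (g : ℝ → ℝ) (a b αstar : ℝ)
    (hab : a < b) (hstar : αstar ∈ Set.Ioo a b)
    (hC2 : ContDiffOn ℝ 2 g (Set.Icc a b))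
    (hconv : ConvexOn ℝ (Set.Icc a b) g)
    (hmono : StrictMonoOn g (Set.Icc a b))
    (hroot : g αstar = 0)
    (m : ℝ) (hm : 0 < m)
    (hm' : ∀ t ∈ Set.Icc a b, m ≤ deriv g t)
    (σ : ℝ) (hσ : ∀ ξ ∈ Set.Icc a b, |deriv (deriv g) ξ| ≤ σ)
    (αk αk1 : ℝ)
    (hαk : αk ∈ Set.Icc a b)
    (hαk1 : αk1 ∈ Set.Icc a αstar)
    (αk2 : ℝ)
    (hstep : αk2 = min (αk1 - g αk1 / deriv g αk1) (αk - g αk / deriv g αk))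
    (hup : αstar ≤ αk2) :
    αk2 - αstar ≤ σ / m * (αk1 - αstar) ^ 2 := by
  have hstarab : αstar ∈ Set.Icc a b := ⟨hstar.1.le, hstar.2.le⟩
  have hσ0 : 0 ≤ σ := le_trans (abs_nonneg _) (hσ αstar hstarab)
  have hk1ab : αk1 ∈ Set.Icc a b := ⟨hαk1.1, le_trans hαk1.2 hstar.2.le⟩
  have hd1 : m ≤ deriv g αk1 := hm' αk1 hk1ab
  have hN : αk2 ≤ αk1 - g αk1 / deriv g αk1 := hstep ▸ min_le_left _ _
  rcases eq_or_lt_of_le hαk1.2 with heq | hlt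
  · subst heq
    rw [hroot] at hN
    simp at hN
    have : σ / m * (αk1 - αk1) ^ 2 = 0 := by ring
    rw [this]
    linarith
  · -- main case: αk1 < αstar
    set s := Set.Icc αk1 αstar with hs
    have hsub : s ⊆ Set.Icc a b := Set.Icc_subset_Icc hαk1.1 hstar.2.le
    have hUD : UniqueDiffOn ℝ s := uniqueDiffOn_Icc hlt
    have hsubIoo : Set.Ioo αk1 αstar ⊆ Set.Ioo a b := Set.Ioo_subset_Ioo hαk1.1 hstar.2.le
    -- g differentiable at αk1 (else deriv g αk1 = 0 < m)
    have hdiff1 : DifferentiableAt ℝ g αk1 := by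
      by_contra h
      rw [deriv_zero_of_not_differentiableAt h] at hd1
      linarith
    have hdw1 : derivWithin g s αk1 = deriv g αk1 :=
      hdiff1.derivWithin (hUD αk1 ⟨le_refl _, hlt.le⟩)
    -- derivWithin g s = deriv g on the open interval
    have hderiv_eq : ∀ y ∈ Set.Ioo αk1 αstar, derivWithin g s y = deriv g y := by
      intro y hy
      exact derivWithin_of_mem_nhds (Icc_mem_nhds hy.1 hy.2)
    -- deriv g is C¹ on Ioo a b
    have hC2' : ContDiffOn ℝ 2 g (Set.Ioo a b) := hC2.mono Set.Ioo_subset_Icc_self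
    have hd' : ContDiffOn ℝ 1 (deriv g) (Set.Ioo a b) := by
      have := hC2'.deriv_of_isOpen (m := 1) isOpen_Ioo (by norm_num)
      simpa using this
    have hdderiv : DifferentiableOn ℝ (deriv g) (Set.Ioo a b) :=
      hd'.differentiableOn one_ne_zero
    -- Taylor hypotheses
    have hf : ContDiffOn ℝ 1 g s := (hC2.of_le one_le_two).mono hsub
    have hf' : DifferentiableOn ℝ (iteratedDerivWithin 1 g s) (Set.Ioo αk1 αstar) := by
      apply DifferentiableOn.congr (hdderiv.mono hsubIoo)
      intro y hy
      rw [iteratedDerivWithin_one, hderiv_eq y hy]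
    obtain ⟨ξ, hξ, hT⟩ : ∃ x' ∈ Set.Ioo αk1 αstar, g αstar - taylorWithinEval g 1 s αk1 αstar =
        iteratedDerivWithin (1 + 1) g s x' * (αstar - αk1) ^ (1 + 1) / ((1 + 1 : ℕ).factorial : ℝ) := by
      have := taylor_mean_remainder_lagrange (f := g) (n := 1) hlt.ne
        (by rwa [Set.uIcc_of_le hlt.le]) (by rwa [Set.uIcc_of_le hlt.le, Set.uIoo_of_le hlt.le])
      rw [Set.uIcc_of_le hlt.le, Set.uIoo_of_le hlt.le] at this
      exact this
    -- rewrite Taylor formula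
    have h1 : iteratedDerivWithin 1 g s αk1 = deriv g αk1 := by
      rw [iteratedDerivWithin_one, hdw1]
    have hξs : ξ ∈ s := ⟨hξ.1.le, hξ.2.le⟩
    have h2 : iteratedDerivWithin 2 g s ξ = deriv (deriv g) ξ := by
      rw [show (2 : ℕ) = 1 + 1 from rfl, iteratedDerivWithin_succ,
        derivWithin_of_mem_nhds (Icc_mem_nhds hξ.1 hξ.2)]
      apply Filter.EventuallyEq.deriv_eq
      filter_upwards [Ioo_mem_nhds hξ.1 hξ.2] with y hy
      rw [iteratedDerivWithin_one, hderiv_eq y hy]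
    rw [h2] at hT
    have hTexp : taylorWithinEval g 1 s αk1 αstar
        = g αk1 + deriv g αk1 * (αstar - αk1) := by
      rw [taylorWithinEval_succ, taylor_within_zero_eval, h1]
      norm_num
      ring
    rw [hTexp, hroot] at hT
    -- now hT : 0 - (g αk1 + deriv g αk1 * (αstar - αk1)) = q * (αstar - αk1)^2 / 2!
    set q := deriv (deriv g) ξ with hq
    have hqb : |q| ≤ σ := hσ ξ (Set.Ioo_subset_Icc_self (hsubIoo hξ))
    have hqs : q ≤ σ := le_trans (le_abs_self q) hqb
    norm_num [Nat.factorial] at hT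
    set d := deriv g αk1 with hdd
    have hdpos : 0 < d := lt_of_lt_of_le hm hd1
    set e := αstar - αk1 with he
    have hepos : 0 < e := by simp [he]; linarith
    -- from hT : -(g αk1 + d * e) = q * e ^ 2 / 2
    have hg1 : g αk1 = -(d * e) - q * e ^ 2 / 2 := by linarith [hT]
    -- Newton step error
    have hNerr : αk1 - g αk1 / d - αstar = q * e ^ 2 / (2 * d) := by
      rw [hg1]
      field_simp
      ring
    have hfin : αk1 - g αk1 / d - αstar ≤ σ / m * e ^ 2 := by
      rw [hNerr, show σ / m * e ^ 2 = σ * e ^ 2 / m by ring,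
        div_le_div_iff₀ (by positivity) hm]
      have he2 : 0 ≤ e ^ 2 := sq_nonneg e
      nlinarith [mul_nonneg (mul_nonneg (sub_nonneg.2 hqs) he2) hm.le,
        mul_nonneg (mul_nonneg hσ0 he2) (by linarith : (0:ℝ) ≤ 2 * d - m)]
    have : (αk1 - αstar) ^ 2 = e ^ 2 := by ring
    rw [this]
    linarith [hN, hfin]
end
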